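/- Quasi-edges have bounded overlap: let T be a bushy, bounded-valence tree, and let {O, O'} be a partition of Ends(T) into two nonempty disjoint clopen sets. Then N₁(Hull(O)) ∩ N₁(Hull(O')) is a bounded subset of T, where Hull(O) is the union of all bi-infinite geodesics with both ends in O (the convex hull of O). -/

import Mathlib

open SimpleGraph

/-- The natural topology on the space of ends of a graph. -/
def endTopology {V : Type*} (G : SimpleGraph V) : TopologicalSpace ↥G.end :=
  letI : ∀ j : (Finset V)ᵒᵖ, TopologicalSpace (G.componentComplFunctor.obj j) := fun _ => ⊥
  inferInstance

/-- A bi-infinite geodesic line in a graph. -/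
def IsGeodLine {V : Type*} (G : SimpleGraph V) (γ : ℤ → V) : Prop :=
  ∀ m n : ℤ, (G.dist (γ m) (γ n) : ℤ) = |m - n|

/-- The positive end of the line `γ` lies in the set `O` of ends. -/
def PosEndIn {V : Type*} (G : SimpleGraph V) (γ : ℤ → V) (O : Set ↥G.end) : Prop :=
  ∃ s ∈ O, ∀ j : (Finset V)ᵒᵖ, ∃ N : ℤ, ∀ n ≥ N, γ n ∈ (s.val j).supp

/-- The negative end of the line `γ` lies in the set `O` of ends. -/
def NegEndIn {V : Type*} (G : SimpleGraph V) (γ : ℤ → V) (O : Set ↥G.end) : Prop :=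
  ∃ s ∈ O, ∀ j : (Finset V)ᵒᵖ, ∃ N : ℤ, ∀ n ≤ N, γ n ∈ (s.val j).supp

/-- The convex hull of a set `O` of ends: the union of all bi-infinite geodesics both of
whose ends lie in `O`. -/
def endHull {V : Type*} (G : SimpleGraph V) (O : Set ↥G.end) : Set V :=
  {x | ∃ γ : ℤ → V, IsGeodLine G γ ∧ PosEndIn G γ O ∧ NegEndIn G γ O ∧ ∃ n : ℤ, γ n = x}

/-- The closed 1-neighborhood of a set of vertices, in the graph metric. -/
def nbhdOne {V : Type*} (G : SimpleGraph V) (A : Set V) : Set V :=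
  {x | ∃ a ∈ A, G.dist x a ≤ 1}

open CategoryTheory Opposite

namespace QuasiEdgeAux

variable {V : Type*}

/-- A walk from a vertex in `C` to a vertex not in `C` must pass through `K`. -/
lemma exists_mem_of_crossing {G : SimpleGraph V} (K : Set V) :
    ∀ {u v : V} (w : G.Walk u v) (C : G.ComponentCompl K),
      u ∈ C → v ∉ C → ∃ k ∈ w.support, k ∈ K := by
  intro u v w
  induction w with
  | nil => exact fun C hu hv => absurd hu hv
  | @cons a b c h p ih =>
    intro C hu hv
    by_cases hbK : b ∈ K
    · exact ⟨b, by simp, hbK⟩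
    · obtain ⟨k, hk, hkK⟩ := ih C (SimpleGraph.ComponentCompl.mem_of_adj a b hu hbK h) hv
      exact ⟨k, by simp [hk], hkK⟩

/-- A point of a geodesic line lying in a component both of whose "exits" are outside the
component is metrically close to `K`. -/
lemma exit_dist {G : SimpleGraph V} (hc : G.Connected) {γ : ℤ → V}
    (hγ : IsGeodLine G γ) {K : Set V} {C : G.ComponentCompl K}
    {t m n : ℤ} (hm : m ≤ t) (hn : t ≤ n)
    (ha : γ t ∈ C) (hgm : γ m ∉ C) (hgn : γ n ∉ C) :
    ∃ k₁ ∈ K, ∃ k₂ ∈ K, G.dist (γ t) k₂ ≤ G.dist k₁ k₂ := by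
  classical
  obtain ⟨w₁, hw₁⟩ := hc.exists_walk_length_eq_dist (γ m) (γ t)
  obtain ⟨w₂, hw₂⟩ := hc.exists_walk_length_eq_dist (γ t) (γ n)
  obtain ⟨k₁, hk₁s, hk₁K⟩ := exists_mem_of_crossing K w₁.reverse C ha hgm
  obtain ⟨k₂, hk₂s, hk₂K⟩ := exists_mem_of_crossing K w₂ C ha hgn
  rw [SimpleGraph.Walk.support_reverse, List.mem_reverse] at hk₁s
  have h1 : G.dist (γ m) k₁ + G.dist k₁ (γ t) ≤ G.dist (γ m) (γ t) := by
    have hsp := SimpleGraph.Walk.take_spec w₁ hk₁s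
    have hlen : (w₁.takeUntil k₁ hk₁s).length + (w₁.dropUntil k₁ hk₁s).length = w₁.length := by
      rw [← SimpleGraph.Walk.length_append, hsp]
    calc G.dist (γ m) k₁ + G.dist k₁ (γ t)
        ≤ (w₁.takeUntil k₁ hk₁s).length + (w₁.dropUntil k₁ hk₁s).length :=
          add_le_add (SimpleGraph.dist_le _) (SimpleGraph.dist_le _)
      _ = w₁.length := hlen
      _ = G.dist (γ m) (γ t) := hw₁
  have h2 : G.dist (γ t) k₂ + G.dist k₂ (γ n) ≤ G.dist (γ t) (γ n) := by
    have hsp := SimpleGraph.Walk.take_spec w₂ hk₂s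
    have hlen : (w₂.takeUntil k₂ hk₂s).length + (w₂.dropUntil k₂ hk₂s).length = w₂.length := by
      rw [← SimpleGraph.Walk.length_append, hsp]
    calc G.dist (γ t) k₂ + G.dist k₂ (γ n)
        ≤ (w₂.takeUntil k₂ hk₂s).length + (w₂.dropUntil k₂ hk₂s).length :=
          add_le_add (SimpleGraph.dist_le _) (SimpleGraph.dist_le _)
      _ = w₂.length := hlen
      _ = G.dist (γ t) (γ n) := hw₂
  have e1 := hγ m t
  have e2 := hγ t n
  have e3 := hγ m n
  rw [abs_sub_comm m t, abs_of_nonneg (by omega : (0:ℤ) ≤ t - m)] at e1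
  rw [abs_sub_comm t n, abs_of_nonneg (by omega : (0:ℤ) ≤ n - t)] at e2
  rw [abs_sub_comm m n, abs_of_nonneg (by omega : (0:ℤ) ≤ n - m)] at e3
  have htri : G.dist (γ m) (γ n) ≤ G.dist (γ m) k₁ + (G.dist k₁ k₂ + G.dist k₂ (γ n)) :=
    le_trans (hc.dist_triangle (v := k₁)) (add_le_add le_rfl (hc.dist_triangle (v := k₂)))
  exact ⟨k₁, hk₁K, k₂, hk₂K, by omega⟩

/-- A clopen set of ends is determined by a finite set of vertices. -/
lemma exists_sep (G : SimpleGraph V) [LocallyFinite G] (hpc : G.Preconnected)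
    (O : Set ↥G.end) (hO : @IsClopen _ (endTopology G) O) :
    ∃ K : Finset V, ∀ s t : ↥G.end, s ∈ O →
      s.val (op K) = t.val (op K) → t ∈ O := by
  classical
  haveI : Fact G.Preconnected := ⟨hpc⟩
  letI : ∀ j : (Finset V)ᵒᵖ, TopologicalSpace (G.componentComplFunctor.obj j) := fun _ => ⊥
  haveI : ∀ j : (Finset V)ᵒᵖ, DiscreteTopology (G.componentComplFunctor.obj j) := fun _ => ⟨rfl⟩
  have hO2 : IsClopen O := hO
  have hSc : IsClosed (G.end : Set (∀ j, G.componentComplFunctor.obj j)) := by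
    have hEq : (G.end : Set (∀ j, G.componentComplFunctor.obj j)) =
        ⋂ (j) (j') (f : j ⟶ j'), {x | G.componentComplFunctor.map f (x j) = x j'} := by
      ext x
      simp only [Set.mem_iInter, Set.mem_setOf_eq]
      constructor
      · intro hx j j' f; exact hx f
      · intro hx
        exact fun {j j'} f => hx j j' f
    rw [hEq]
    exact isClosed_iInter fun j => isClosed_iInter fun j' => isClosed_iInter fun f =>
      isClosed_eq (Continuous.comp continuous_of_discreteTopology (continuous_apply j))
        (continuous_apply j')
  haveI : ∀ j : (Finset V)ᵒᵖ, Finite (G.componentComplFunctor.obj j) :=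
    fun j => G.componentCompl_finite j.unop
  haveI : ∀ j : (Finset V)ᵒᵖ, CompactSpace (G.componentComplFunctor.obj j) :=
    fun j => Finite.compactSpace
  haveI : CompactSpace (∀ j : (Finset V)ᵒᵖ, G.componentComplFunctor.obj j) := Pi.compactSpace
  haveI : CompactSpace ↥G.end := isCompact_iff_compactSpace.mp hSc.isCompact
  have hcomp : IsCompact (Subtype.val '' O) := hO2.1.isCompact.image continuous_subtype_val
  obtain ⟨U, hUopen, hUpre⟩ := isOpen_induced_iff.mp hO2.2
  have himg : Subtype.val '' O = G.end ∩ U := by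
    rw [← hUpre, Subtype.image_preimage_coe]
  have hmemU : ∀ f : ↥(Subtype.val '' O), f.val ∈ U := fun f => (himg.le f.2).2
  choose I u hIu hpi using fun f : ↥(Subtype.val '' O) =>
    isOpen_pi_iff.mp hUopen f.val (hmemU f)
  set W : ↥(Subtype.val '' O) → Set (∀ j, G.componentComplFunctor.obj j) :=
    fun f => ⋂ j ∈ I f, (fun x => x j) ⁻¹' {f.val j} with hW
  have hWopen : ∀ f, IsOpen (W f) := fun f =>
    isOpen_biInter_finset fun j _ => (isOpen_discrete _).preimage (continuous_apply j)
  have hWsub : ∀ f, W f ⊆ U := by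
    intro f x hx
    refine hpi f ?_
    intro j hj
    have hxj : x j = f.val j := Set.mem_iInter₂.mp hx j hj
    rw [hxj]
    exact (hIu f j hj).2
  have hcover : Subtype.val '' O ⊆ ⋃ f, W f := fun x hx =>
    Set.mem_iUnion.mpr ⟨⟨x, hx⟩, Set.mem_iInter₂.mpr fun j _ => rfl⟩
  obtain ⟨T, hT⟩ := hcomp.elim_finite_subcover W hWopen hcover
  refine ⟨T.sup (fun f => (I f).sup Opposite.unop), ?_⟩
  intro s t hsO hst
  have hs : s.val ∈ Subtype.val '' O := ⟨s, hsO, rfl⟩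
  obtain ⟨f, hfT, hsW⟩ := Set.mem_iUnion₂.mp (hT hs)
  have hagree : ∀ j ∈ I f, t.val j = f.val j := by
    intro j hj
    have hle : j.unop ≤ T.sup (fun f => (I f).sup Opposite.unop) :=
      le_trans (Finset.le_sup hj) (Finset.le_sup (f := fun f => (I f).sup Opposite.unop) hfT)
    have e1 := t.2 ((homOfLE hle).op)
    have e2 := s.2 ((homOfLE hle).op)
    have hsj : s.val j = f.val j := Set.mem_iInter₂.mp hsW j hj
    rw [← hsj, ← e1, ← e2, hst]
  have htW : t.val ∈ W f := Set.mem_iInter₂.mpr fun j hj => hagree j hj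
  have : t ∈ Subtype.val ⁻¹' U := hWsub f htW
  rwa [hUpre] at this

end QuasiEdgeAux

/-- Quasi-edges have bounded overlap: if `{O, O'}` is a partition of the ends of a bushy
bounded-valence tree into two nonempty disjoint clopen sets, then the intersection of the
1-neighborhoods of their convex hulls is bounded. -/
theorem quasi_edge_bounded_overlap {V : Type*} (G : SimpleGraph V)
    (hT : G.IsTree) [LocallyFinite G] (Vbd : ℕ) (hval : ∀ v : V, G.degree v ≤ Vbd)
    (hbushy : Infinite ↥G.end)
    (O O' : Set ↥G.end)
    (hO : @IsClopen _ (endTopology G) O) (hO' : @IsClopen _ (endTopology G) O')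
    (hOne : O.Nonempty) (hO'ne : O'.Nonempty)
    (hdisj : Disjoint O O') (hunion : O ∪ O' = Set.univ) :
    ∃ D : ℕ, ∀ x ∈ nbhdOne G (endHull G O) ∩ nbhdOne G (endHull G O'),
      ∀ y ∈ nbhdOne G (endHull G O) ∩ nbhdOne G (endHull G O'),
        G.dist x y ≤ D := by
  classical
  have hconn : G.Connected := hT.isConnected
  have hO'c : O' = Oᶜ := by
    ext s
    constructor
    · intro h hsO; exact Set.disjoint_left.mp hdisj hsO h
    · intro h
      rcases (Set.eq_univ_iff_forall.mp hunion s) with h' | h'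
      · exact absurd h' h
      · exact h'
  obtain ⟨K₁, hK₁⟩ := QuasiEdgeAux.exists_sep G hconn.preconnected O hO
  obtain ⟨K₂, hK₂⟩ := QuasiEdgeAux.exists_sep G hconn.preconnected O' hO'
  set K : Finset V := K₁ ∪ K₂ with hK
  have descend : ∀ (s t : ↥G.end) (K' : Finset V), K' ≤ K →
      s.val (op K) = t.val (op K) → s.val (op K') = t.val (op K') := by
    intro s t K' hle h
    have hs := s.2 ((homOfLE hle).op)
    have ht := t.2 ((homOfLE hle).op)
    rw [← hs, ← ht, h]
  have sep : ∀ s t : ↥G.end, s.val (op K) = t.val (op K) → (s ∈ O ↔ t ∈ O) := by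
    intro s t h
    constructor
    · intro hs
      exact hK₁ s t hs (descend s t K₁ Finset.subset_union_left h)
    · intro ht
      by_contra hs
      have hsO' : s ∈ O' := by rw [hO'c]; exact hs
      have htO' : t ∈ O' := hK₂ s t hsO' (descend s t K₂ Finset.subset_union_right h)
      rw [hO'c] at htO'
      exact htO' ht
  set DK : ℕ := (K ×ˢ K).sup (fun p => G.dist p.1 p.2) with hDK
  have hDKle : ∀ k₁ ∈ K, ∀ k₂ ∈ K, G.dist k₁ k₂ ≤ DK := fun k₁ h₁ k₂ h₂ =>
    Finset.le_sup (f := fun p : V × V => G.dist p.1 p.2) (Finset.mk_mem_product h₁ h₂)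
  have exit : ∀ (ε : ℤ → V), IsGeodLine G ε → ∀ (uu ww : ↥G.end) (t : ℤ),
      (∀ j, ∃ N, ∀ n ≥ N, ε n ∈ (uu.val j).supp) →
      (∀ j, ∃ N, ∀ n ≤ N, ε n ∈ (ww.val j).supp) →
      ∀ C : G.ComponentCompl (K : Set V), ε t ∈ C →
      uu.val (op K) ≠ C → ww.val (op K) ≠ C →
      ∃ k ∈ K, G.dist (ε t) k ≤ DK := by
    intro ε hε uu ww t hu hw C hC hune hwne
    obtain ⟨Np, hNp⟩ := hu (op K)
    obtain ⟨Nm, hNm⟩ := hw (op K)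
    have hgn : ε (max t Np) ∉ C := by
      intro hmem
      obtain ⟨h1, he1⟩ := hmem
      obtain ⟨h2, he2⟩ := hNp (max t Np) (le_max_right _ _)
      exact hune (he2.symm.trans he1)
    have hgm : ε (min t Nm) ∉ C := by
      intro hmem
      obtain ⟨h1, he1⟩ := hmem
      obtain ⟨h2, he2⟩ := hNm (min t Nm) (min_le_right _ _)
      exact hwne (he2.symm.trans he1)
    obtain ⟨k₁, hk₁, k₂, hk₂, hd⟩ :=
      QuasiEdgeAux.exit_dist hconn hε (min_le_left t Nm) (le_max_left t Np) hC hgm hgn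
    exact ⟨k₂, hk₂, hd.trans (hDKle k₁ hk₁ k₂ hk₂)⟩
  have main : ∀ z ∈ nbhdOne G (endHull G O) ∩ nbhdOne G (endHull G O'),
      ∃ k ∈ K, G.dist z k ≤ DK + 3 := by
    rintro z ⟨⟨a, ⟨γ, hγ, ⟨sp, hspO, hsp⟩, ⟨sm, hsmO, hsm⟩, ta, hta⟩, hza⟩,
              ⟨b, ⟨δ, hδ, ⟨sp', hspO', hsp'⟩, ⟨sm', hsmO', hsm'⟩, tb, htb⟩, hzb⟩⟩
    subst hta
    subst htb
    by_cases haK : γ ta ∈ K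
    · exact ⟨γ ta, haK, by omega⟩
    have haK' : γ ta ∉ (K : Set V) := fun h => haK (Finset.mem_coe.mp h)
    set C : G.ComponentCompl (K : Set V) := G.componentComplMk haK' with hC
    have haC : γ ta ∈ C := G.componentComplMk_mem haK'
    by_cases hCO : sp.val (op K) = C ∨ sm.val (op K) = C
    · obtain ⟨uO, huO, huC⟩ : ∃ uu : ↥G.end, uu ∈ O ∧ uu.val (op K) = C :=
        hCO.elim (fun h => ⟨sp, hspO, h⟩) (fun h => ⟨sm, hsmO, h⟩)
      have hO'neC : ∀ u' : ↥G.end, u' ∈ O' → u'.val (op K) ≠ C := by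
        intro u' hu' he
        have hagree : uO.val (op K) = u'.val (op K) := by rw [huC, he]
        have : u' ∈ O := (sep uO u' hagree).mp huO
        exact Set.disjoint_left.mp hdisj this hu'
      by_cases hbK : δ tb ∈ K
      · exact ⟨δ tb, hbK, by omega⟩
      by_cases hCb : δ tb ∈ C
      · obtain ⟨k, hkK, hk⟩ := exit δ hδ sp' sm' tb hsp' hsm' C hCb
          (hO'neC sp' hspO') (hO'neC sm' hsmO')
        have htr : G.dist z k ≤ G.dist z (δ tb) + G.dist (δ tb) k := hconn.dist_triangle
        exact ⟨k, hkK, by omega⟩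
      · have hdab : G.dist (γ ta) (δ tb) ≤ 2 := by
          have htr : G.dist (γ ta) (δ tb) ≤ G.dist (γ ta) z + G.dist z (δ tb) :=
            hconn.dist_triangle
          have hcomm : G.dist (γ ta) z = G.dist z (γ ta) := SimpleGraph.dist_comm
          omega
        obtain ⟨w, hw⟩ := hconn.exists_walk_length_eq_dist (γ ta) (δ tb)
        obtain ⟨k, hks, hkK⟩ := QuasiEdgeAux.exists_mem_of_crossing (K : Set V) w C haC hCb
        have hdk : G.dist (γ ta) k ≤ 2 := by
          calc G.dist (γ ta) k ≤ (w.takeUntil k hks).length := SimpleGraph.dist_le _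
            _ ≤ w.length := SimpleGraph.Walk.length_takeUntil_le w hks
            _ = G.dist (γ ta) (δ tb) := hw
            _ ≤ 2 := hdab
        have htr : G.dist z k ≤ G.dist z (γ ta) + G.dist (γ ta) k := hconn.dist_triangle
        exact ⟨k, Finset.mem_coe.mp hkK, by omega⟩
    · have hCp : sp.val (op K) ≠ C := fun h => hCO (Or.inl h)
      have hCm : sm.val (op K) ≠ C := fun h => hCO (Or.inr h)
      obtain ⟨k, hkK, hk⟩ := exit γ hγ sp sm ta hsp hsm C haC hCp hCm
      have htr : G.dist z k ≤ G.dist z (γ ta) + G.dist (γ ta) k := hconn.dist_triangle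
      exact ⟨k, hkK, by omega⟩
  refine ⟨3 * DK + 6, ?_⟩
  intro x hx y hy
  obtain ⟨kx, hkx, hdx⟩ := main x hx
  obtain ⟨ky, hky, hdy⟩ := main y hy
  have h1 : G.dist x y ≤ G.dist x kx + G.dist kx y := hconn.dist_triangle
  have h2 : G.dist kx y ≤ G.dist kx ky + G.dist ky y := hconn.dist_triangle
  have h3 : G.dist kx ky ≤ DK := hDKle kx hkx ky hky
  have h4 : G.dist ky y = G.dist y ky := SimpleGraph.dist_comm
  omega
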